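/- arXiv:math/0306051 — 2 statements merged into one kernel-verified Lean document; each statement's English description precedes it below -/
import Mathlib

section
/- Assume the Szegő class condition: for every l ∈ ℕ, the partial products ∏_{p=1}^{m} d_{l,l+p} converge, as m → ∞, to a positive limit. Then for every k, l ∈ ℕ, the sequence n ↦ (φ♯_n)^{(k)}(0,l) converges in ℂ as n → ∞ (the limit exists and is finite). -/
open Polynomial Filter Finset

/-- The complementary quantity `d_{k,j} = (1 - |γ_{k,j}|²)^{1/2}`. -/
noncomputable def dd (γ : ℕ → ℕ → ℂ) (k j : ℕ) : ℝ :=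
  Real.sqrt (1 - ‖γ k j‖ ^ 2)

/-- The pair `(φ_n(·,l), φ♯_n(·,l))` of Szegő-type orthogonal polynomials attached to the
Schur parameters `γ` and the diagonal `s`, defined by the recurrences
`φ_n(X,l) = d_{l,n+l}⁻¹ (X φ_{n-1}(X,l+1) - γ_{l,n+l} φ♯_{n-1}(X,l))` and
`φ♯_n(X,l) = d_{l,n+l}⁻¹ (-conj(γ_{l,n+l}) X φ_{n-1}(X,l+1) + φ♯_{n-1}(X,l))`,
with `φ_0(X,l) = φ♯_0(X,l) = s_l^{-1/2}`. -/
noncomputable def phiPair (s : ℕ → ℝ) (γ : ℕ → ℕ → ℂ) : ℕ → ℕ → Polynomial ℂ × Polynomial ℂ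
  | 0, l => (Polynomial.C (((Real.sqrt (s l))⁻¹ : ℝ) : ℂ),
             Polynomial.C (((Real.sqrt (s l))⁻¹ : ℝ) : ℂ))
  | n + 1, l =>
      (Polynomial.C (((dd γ l (n + 1 + l))⁻¹ : ℝ) : ℂ) *
         (Polynomial.X * (phiPair s γ n (l + 1)).1 -
           Polynomial.C (γ l (n + 1 + l)) * (phiPair s γ n l).2),
       Polynomial.C (((dd γ l (n + 1 + l))⁻¹ : ℝ) : ℂ) *
         (-(Polynomial.C ((starRingEnd ℂ) (γ l (n + 1 + l))) * Polynomial.X *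
             (phiPair s γ n (l + 1)).1) +
           (phiPair s γ n l).2))

/-- The orthogonal polynomial `φ_n(X,l)`. -/
noncomputable def phi (s : ℕ → ℝ) (γ : ℕ → ℕ → ℂ) (n l : ℕ) : Polynomial ℂ :=
  (phiPair s γ n l).1

/-- The reversed polynomial `φ♯_n(X,l)`. -/
noncomputable def phiSharp (s : ℕ → ℝ) (γ : ℕ → ℕ → ℂ) (n l : ℕ) : Polynomial ℂ :=
  (phiPair s γ n l).2

/-- The determinant `D_{r,q} = (∏_{k=r}^q s_k) ∏_{r ≤ k < j ≤ q} d_{k,j}²` of the positive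
definite kernel associated with the parameters `γ`. -/
noncomputable def Ddet (s : ℕ → ℝ) (γ : ℕ → ℕ → ℂ) (r q : ℕ) : ℝ :=
  (∏ k ∈ Finset.Icc r q, s k) *
    ∏ k ∈ Finset.Icc r q, ∏ j ∈ Finset.Icc (k + 1) q, (dd γ k j) ^ 2

lemma phiSharp_coeff_succ (s : ℕ → ℝ) (γ : ℕ → ℕ → ℂ) (n l j : ℕ) :
    (phiSharp s γ (n+1) l).coeff j =
      (((dd γ l (n+1+l))⁻¹ : ℝ) : ℂ) *
        ((phiSharp s γ n l).coeff j -
          (starRingEnd ℂ) (γ l (n+1+l)) * (X * phi s γ n (l+1)).coeff j) := by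
  show ((phiPair s γ (n+1) l).2).coeff j = _
  rw [phiPair]
  simp only [coeff_C_mul, coeff_add, coeff_neg, mul_assoc, phiSharp, phi]
  ring

lemma phi_coeff_succ (s : ℕ → ℝ) (γ : ℕ → ℕ → ℂ) (n l j : ℕ) :
    (phi s γ (n+1) l).coeff j =
      (((dd γ l (n+1+l))⁻¹ : ℝ) : ℂ) *
        ((X * phi s γ n (l+1)).coeff j - γ l (n+1+l) * (phiSharp s γ n l).coeff j) := by
  show ((phiPair s γ (n+1) l).1).coeff j = _
  rw [phiPair]
  simp only [coeff_C_mul, coeff_sub, phiSharp, phi]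

section Infra
-- (infra lemmas assumed from /tmp/w/a.lean, inline later)
lemma dd_pos (γ : ℕ → ℕ → ℂ) (l : ℕ) (hγ : ∀ k j, k < j → ‖γ k j‖ < 1)
    (p : ℕ) (hp : 1 ≤ p) : 0 < dd γ l (l + p) := by
  have h : ‖γ l (l + p)‖ < 1 := hγ l (l + p) (by omega)
  have : (0:ℝ) < 1 - ‖γ l (l + p)‖ ^ 2 := by nlinarith [norm_nonneg (γ l (l+p))]
  exact Real.sqrt_pos.2 this

lemma dd_le_one (γ : ℕ → ℕ → ℂ) (l p : ℕ) : dd γ l (l + p) ≤ 1 := by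
  rw [dd, Real.sqrt_le_one]
  nlinarith [norm_nonneg (γ l (l+p))]

lemma prod_dd_pos (γ : ℕ → ℕ → ℂ) (l : ℕ) (hγ : ∀ k j, k < j → ‖γ k j‖ < 1) (m : ℕ) :
    0 < ∏ p ∈ Finset.Icc 1 m, dd γ l (l + p) :=
  Finset.prod_pos fun p hp => dd_pos γ l hγ p (Finset.mem_Icc.1 hp).1

lemma prod_dd_le_one (γ : ℕ → ℕ → ℂ) (l m : ℕ) :
    ∏ p ∈ Finset.Icc 1 m, dd γ l (l + p) ≤ 1 :=
  Finset.prod_le_one (fun p _ => Real.sqrt_nonneg _) (fun p _ => dd_le_one γ l p)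

lemma prod_ge (γ : ℕ → ℕ → ℂ) (l : ℕ) {g : ℝ}
    (hT : Tendsto (fun m => ∏ p ∈ Finset.Icc 1 m, dd γ l (l + p)) atTop (nhds g))
    (m : ℕ) : g ≤ ∏ p ∈ Finset.Icc 1 m, dd γ l (l + p) := by
  refine le_of_tendsto hT ?_
  filter_upwards [eventually_ge_atTop m] with n hn
  have he : Finset.Icc 1 n = Finset.Icc 1 m ∪ Finset.Ioc m n := by
    ext x; simp only [Finset.mem_Icc, Finset.mem_union, Finset.mem_Ioc]; omega
  rw [he, Finset.prod_union (by simp [Finset.disjoint_left]; omega)]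
  calc (∏ p ∈ Finset.Icc 1 m, dd γ l (l + p)) * ∏ p ∈ Finset.Ioc m n, dd γ l (l + p)
      ≤ (∏ p ∈ Finset.Icc 1 m, dd γ l (l + p)) * 1 := by
        apply mul_le_mul_of_nonneg_left
        · exact Finset.prod_le_one (fun p _ => Real.sqrt_nonneg _) (fun p _ => dd_le_one γ l p)
        · exact Finset.prod_nonneg (fun p _ => Real.sqrt_nonneg _)
    _ = _ := mul_one _

lemma dd_ge (γ : ℕ → ℕ → ℂ) (l : ℕ) {g : ℝ}
    (hT : Tendsto (fun m => ∏ p ∈ Finset.Icc 1 m, dd γ l (l + p)) atTop (nhds g))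
    (p : ℕ) (hp : 1 ≤ p) : g ≤ dd γ l (l + p) := by
  refine (prod_ge γ l hT p).trans ?_
  obtain ⟨q, rfl⟩ : ∃ q, p = q + 1 := ⟨p - 1, by omega⟩
  rw [Finset.prod_Icc_succ_top (by omega)]
  calc (∏ i ∈ Finset.Icc 1 q, dd γ l (l + i)) * dd γ l (l + (q+1))
      ≤ 1 * dd γ l (l + (q+1)) :=
        mul_le_mul_of_nonneg_right (prod_dd_le_one γ l q) (Real.sqrt_nonneg _)
    _ = _ := one_mul _

lemma gamma_sq_summable (γ : ℕ → ℕ → ℂ) (l : ℕ) (hγ : ∀ k j, k < j → ‖γ k j‖ < 1) {g : ℝ}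
    (hg : 0 < g)
    (hT : Tendsto (fun m => ∏ p ∈ Finset.Icc 1 m, dd γ l (l + p)) atTop (nhds g)) :
    Summable (fun p => ‖γ l (l + (p + 1))‖ ^ 2) := by
  apply summable_of_sum_range_le (c := -2 * Real.log g)
  · intro n; positivity
  · intro n
    have hsq : ∀ p, 1 ≤ p → dd γ l (l + p) ^ 2 = 1 - ‖γ l (l + p)‖ ^ 2 := by
      intro p hp
      have h : ‖γ l (l + p)‖ < 1 := hγ l (l + p) (by omega)
      rw [dd, Real.sq_sqrt]; nlinarith [norm_nonneg (γ l (l+p))]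
    have key : ∀ p ∈ Finset.range n, ‖γ l (l + (p+1))‖^2 ≤ -2 * Real.log (dd γ l (l + (p+1))) := by
      intro p _
      have hd := dd_pos γ l hγ (p+1) (by omega)
      have hlog := Real.log_le_sub_one_of_pos (x := dd γ l (l+(p+1)) ^ 2) (by positivity)
      rw [Real.log_pow] at hlog
      have := hsq (p+1) (by omega)
      push_cast at hlog; nlinarith
    calc ∑ p ∈ Finset.range n, ‖γ l (l + (p+1))‖^2
        ≤ ∑ p ∈ Finset.range n, -2 * Real.log (dd γ l (l + (p+1))) := Finset.sum_le_sum key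
      _ = -2 * Real.log (∏ p ∈ Finset.Icc 1 n, dd γ l (l + p)) := by
          rw [Real.log_prod (fun p hp => (dd_pos γ l hγ p (Finset.mem_Icc.1 hp).1).ne'),
            Finset.mul_sum]
          rw [show Finset.Icc 1 n = Finset.Ico 1 (n+1) by rfl, Finset.sum_Ico_eq_sum_range]
          simp [add_comm]
      _ ≤ -2 * Real.log g := by
          have := Real.log_le_log hg (prod_ge γ l hT n)
          linarith
end Infra

lemma step_lemma (s : ℕ → ℝ) (γ : ℕ → ℕ → ℂ)
    (hγ : ∀ k j, k < j → ‖γ k j‖ < 1)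
    (hSzego : ∀ l, ∃ g : ℝ, 0 < g ∧
      Tendsto (fun m => ∏ p ∈ Finset.Icc 1 m, dd γ l (l + p)) atTop (nhds g))
    (j l : ℕ)
    (hA : Summable (fun n => ‖(X * phi s γ n (l+1)).coeff j‖^2)) :
    Summable (fun n => ‖(phi s γ n l).coeff j‖^2) ∧
      ∃ c, Tendsto (fun n => (phiSharp s γ n l).coeff j) atTop (nhds c) := by
  obtain ⟨g, hg, hT⟩ := hSzego l
  set b : ℕ → ℂ := fun n => (phiSharp s γ n l).coeff j with hb_def
  set w : ℕ → ℂ := fun n => (X * phi s γ n (l+1)).coeff j with hw_def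
  set P : ℕ → ℝ := fun n => ∏ p ∈ Finset.Icc 1 n, dd γ l (l + p) with hP_def
  have hγsq := gamma_sq_summable γ l hγ hg hT
  -- summability of the correction terms
  have hterm : Summable (fun m => ((P m : ℝ) : ℂ) * (starRingEnd ℂ) (γ l (m+1+l)) * w m) := by
    apply Summable.of_norm
    have hbound : ∀ m, ‖((P m : ℝ) : ℂ) * (starRingEnd ℂ) (γ l (m+1+l)) * w m‖ ≤
        (1/2) * (‖γ l (l + (m+1))‖^2 + ‖w m‖^2) := by
      intro m
      have h1 : ‖((P m : ℝ) : ℂ) * (starRingEnd ℂ) (γ l (m+1+l)) * w m‖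
          = |P m| * ‖γ l (m+1+l)‖ * ‖w m‖ := by
        simp [norm_mul, Complex.norm_real]
      rw [h1, abs_of_pos (prod_dd_pos γ l hγ m)]
      have h2 : P m ≤ 1 := prod_dd_le_one γ l m
      have h3 : (0:ℝ) ≤ ‖γ l (m+1+l)‖ := norm_nonneg _
      have h4 : (0:ℝ) ≤ ‖w m‖ := norm_nonneg _
      have h5 : m+1+l = l + (m+1) := by omega
      rw [h5]
      nlinarith [sq_nonneg (‖γ l (l+(m+1))‖ - ‖w m‖), prod_dd_pos γ l hγ m]
    refine Summable.of_nonneg_of_le (fun m => norm_nonneg _) hbound ?_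
    exact (hγsq.add hA).mul_left (1/2)
  -- telescoping identity
  have hne : ∀ n : ℕ, (((dd γ l (n+1+l)) : ℝ) : ℂ) ≠ 0 := by
    intro n
    have : (0:ℝ) < dd γ l (l+(n+1)) := dd_pos γ l hγ (n+1) (by omega)
    simp only [ne_eq, Complex.ofReal_eq_zero]
    rw [show n+1+l = l+(n+1) by omega]
    exact this.ne'
  have hF : ∀ n, ((P n : ℝ) : ℂ) * b n =
      b 0 - ∑ m ∈ Finset.range n, ((P m : ℝ) : ℂ) * (starRingEnd ℂ) (γ l (m+1+l)) * w m := by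
    intro n
    induction n with
    | zero => simp [hP_def]
    | succ n ih =>
      have hPsucc : P (n+1) = P n * dd γ l (l + (n+1)) :=
        Finset.prod_Icc_succ_top (by omega) _
      have hrec : b (n+1) = (((dd γ l (n+1+l))⁻¹ : ℝ) : ℂ) *
          (b n - (starRingEnd ℂ) (γ l (n+1+l)) * w n) := phiSharp_coeff_succ s γ n l j
      rw [Finset.sum_range_succ, hPsucc, hrec]
      push_cast
      rw [show l + (n+1) = n+1+l by omega, mul_assoc,
        ← mul_assoc (((dd γ l (n+1+l)) : ℝ) : ℂ), mul_inv_cancel₀ (hne n), one_mul,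
        mul_sub, ih]
      ring
  -- convergence of b
  have hPg : Tendsto (fun n => ((P n : ℝ) : ℂ)) atTop (nhds ((g : ℝ) : ℂ)) :=
    (Complex.continuous_ofReal.tendsto g).comp hT
  have hgne : ((g:ℝ):ℂ) ≠ 0 := by simp [Complex.ofReal_eq_zero]; exact hg.ne'
  have hPn_ne : ∀ n, ((P n : ℝ) : ℂ) ≠ 0 := by
    intro n; simp [Complex.ofReal_eq_zero]; exact (prod_dd_pos γ l hγ n).ne'
  have hsum := hterm.hasSum.tendsto_sum_nat
  have hFb : Tendsto (fun n => ((P n : ℝ) : ℂ) * b n) atTop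
      (nhds (b 0 - ∑' m, ((P m : ℝ) : ℂ) * (starRingEnd ℂ) (γ l (m+1+l)) * w m)) := by
    have := (tendsto_const_nhds (x := b 0)).sub hsum
    refine this.congr fun n => (hF n).symm
  have hbtend : ∃ c, Tendsto b atTop (nhds c) := by
    refine ⟨((g:ℝ):ℂ)⁻¹ * (b 0 - ∑' m, ((P m : ℝ) : ℂ) * (starRingEnd ℂ) (γ l (m+1+l)) * w m), ?_⟩
    have := (hPg.inv₀ hgne).mul hFb
    refine this.congr fun n => ?_
    field_simp [hPn_ne n]
  refine ⟨?_, hbtend⟩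
  -- summability of the phi coefficients
  obtain ⟨c, hc⟩ := hbtend
  obtain ⟨B, hB⟩ : ∃ B, ∀ n, ‖b n‖ ≤ B := by
    obtain ⟨B, hB⟩ := hc.norm.isBoundedUnder_le.bddAbove_range
    exact ⟨B, fun n => hB ⟨n, rfl⟩⟩
  have hBnn : 0 ≤ B := le_trans (norm_nonneg _) (hB 0)
  have habound : ∀ n, ‖(phi s γ (n+1) l).coeff j‖^2 ≤
      (g⁻¹^2 * 2) * (‖w n‖^2 + B^2 * ‖γ l (l+(n+1))‖^2) := by
    intro n
    have hrec : (phi s γ (n+1) l).coeff j = (((dd γ l (n+1+l))⁻¹ : ℝ) : ℂ) *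
        (w n - γ l (n+1+l) * b n) := phi_coeff_succ s γ n l j
    have hdge : g ≤ dd γ l (l+(n+1)) := dd_ge γ l hT (n+1) (by omega)
    have hdpos : 0 < dd γ l (l+(n+1)) := dd_pos γ l hγ (n+1) (by omega)
    have hinv : (dd γ l (n+1+l))⁻¹ ≤ g⁻¹ := by
      rw [show n+1+l = l+(n+1) by omega]
      exact inv_anti₀ hg hdge
    have h1 : ‖(phi s γ (n+1) l).coeff j‖ ≤ g⁻¹ * (‖w n‖ + ‖γ l (l+(n+1))‖ * B) := by
      rw [hrec]
      rw [norm_mul, Complex.norm_real, Real.norm_eq_abs, abs_of_pos (by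
        rw [show n+1+l = l+(n+1) by omega]; positivity)]
      have h2 : ‖w n - γ l (n+1+l) * b n‖ ≤ ‖w n‖ + ‖γ l (l+(n+1))‖ * B := by
        refine (norm_sub_le _ _).trans ?_
        gcongr
        rw [norm_mul, show n+1+l = l+(n+1) by omega]
        exact mul_le_mul_of_nonneg_left (hB n) (norm_nonneg _)
      exact mul_le_mul hinv h2 (norm_nonneg _) (by positivity)
    have h4 : ‖(phi s γ (n+1) l).coeff j‖^2 ≤ (g⁻¹ * (‖w n‖ + ‖γ l (l+(n+1))‖ * B))^2 :=
      pow_le_pow_left₀ (norm_nonneg _) h1 2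
    nlinarith [sq_nonneg (‖w n‖ - ‖γ l (l+(n+1))‖ * B), sq_nonneg g⁻¹, norm_nonneg (w n),
      norm_nonneg (γ l (l+(n+1))), hBnn, sq_nonneg (g⁻¹ * (‖w n‖ - ‖γ l (l+(n+1))‖ * B))]
  have hsum2 : Summable (fun n => ‖(phi s γ (n+1) l).coeff j‖^2) := by
    refine Summable.of_nonneg_of_le (fun n => by positivity) habound ?_
    exact ((hA.add (hγsq.mul_left (B^2))).mul_left _)
  exact (summable_nat_add_iff (f := fun n => ‖(phi s γ n l).coeff j‖^2) 1).mp hsum2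

lemma main_lemma (s : ℕ → ℝ) (γ : ℕ → ℕ → ℂ)
    (hγ : ∀ k j, k < j → ‖γ k j‖ < 1)
    (hSzego : ∀ l, ∃ g : ℝ, 0 < g ∧
      Tendsto (fun m => ∏ p ∈ Finset.Icc 1 m, dd γ l (l + p)) atTop (nhds g)) :
    ∀ j l, Summable (fun n => ‖(phi s γ n l).coeff j‖^2) ∧
      ∃ c, Tendsto (fun n => (phiSharp s γ n l).coeff j) atTop (nhds c) := by
  intro j
  induction j with
  | zero =>
    intro l
    apply step_lemma s γ hγ hSzego 0 l
    have he : (fun n => ‖(X * phi s γ n (l+1)).coeff 0‖^2) = fun _ => (0:ℝ) := by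
      funext n; simp [Polynomial.mul_coeff_zero]
    rw [he]; exact summable_zero
  | succ j ih =>
    intro l
    apply step_lemma s γ hγ hSzego (j+1) l
    have := (ih (l+1)).1
    simpa [Polynomial.coeff_X_mul] using this


/-- Under the Szegő class condition (for every `l`, the partial products `∏_{p=1}^m d_{l,l+p}`
converge to a positive limit), for every `k, l ∈ ℕ` the sequence `n ↦ (φ♯_n)^{(k)}(0,l)`
converges in `ℂ` as `n → ∞`. -/
theorem phiSharp_derivative_tendsto (s : ℕ → ℝ) (γ : ℕ → ℕ → ℂ)
    (hs : ∀ l, 0 < s l) (hγ : ∀ k j, k < j → ‖γ k j‖ < 1)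
    (hSzego : ∀ l, ∃ g : ℝ, 0 < g ∧
      Filter.Tendsto (fun m => ∏ p ∈ Finset.Icc 1 m, dd γ l (l + p)) Filter.atTop (nhds g))
    (k l : ℕ) :
    ∃ c : ℂ, Filter.Tendsto (fun n => (Polynomial.derivative^[k] (phiSharp s γ n l)).eval 0)
      Filter.atTop (nhds c) := by
  obtain ⟨-, c, hc⟩ := main_lemma s γ hγ hSzego k l
  refine ⟨(k.descFactorial k : ℂ) * c, ?_⟩
  have h := hc.const_mul ((k.descFactorial k : ℂ))
  refine h.congr fun n => ?_
  rw [← Polynomial.coeff_zero_eq_eval_zero, Polynomial.coeff_iterate_derivative]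
  simp [nsmul_eq_mul]
end

section
/- First half of Theorem 3.3 (Φ_n → 0): Assume the Szegő class condition: for every l ∈ ℕ, the partial products ∏_{p=1}^{m} d_{l,l+p} converge, as m → ∞, to a positive limit. Then for every k, l ∈ ℕ, φ_n^{(k)}(0,l) → 0 as n → ∞; equivalently, for every fixed k and l, the coefficient of X^k in φ_n(X,l) tends to 0 as n → ∞. -/
open Polynomial Filter Finset

section Aux

variable (s : ℕ → ℝ) (γ : ℕ → ℕ → ℂ)

lemma phi_zero_def (l : ℕ) : phi s γ 0 l = Polynomial.C (((Real.sqrt (s l))⁻¹ : ℝ) : ℂ) := rfl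

lemma phiSharp_zero_def (l : ℕ) :
    phiSharp s γ 0 l = Polynomial.C (((Real.sqrt (s l))⁻¹ : ℝ) : ℂ) := rfl

lemma phi_succ (n l : ℕ) : phi s γ (n+1) l =
    Polynomial.C (((dd γ l (n + 1 + l))⁻¹ : ℝ) : ℂ) *
      (Polynomial.X * phi s γ n (l+1) - Polynomial.C (γ l (n+1+l)) * phiSharp s γ n l) := rfl

lemma phiSharp_succ (n l : ℕ) : phiSharp s γ (n+1) l =
    Polynomial.C (((dd γ l (n + 1 + l))⁻¹ : ℝ) : ℂ) *
      (-(Polynomial.C ((starRingEnd ℂ) (γ l (n+1+l))) * Polynomial.X * phi s γ n (l+1)) +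
        phiSharp s γ n l) := rfl

lemma phi_c0 (n l : ℕ) : (phi s γ (n+1) l).coeff 0 =
    (((dd γ l (n + 1 + l))⁻¹ : ℝ) : ℂ) * (-(γ l (n+1+l) * (phiSharp s γ n l).coeff 0)) := by
  rw [phi_succ]
  simp [mul_comm]

lemma phi_cs (n l k : ℕ) : (phi s γ (n+1) l).coeff (k+1) =
    (((dd γ l (n + 1 + l))⁻¹ : ℝ) : ℂ) *
      ((phi s γ n (l+1)).coeff k - γ l (n+1+l) * (phiSharp s γ n l).coeff (k+1)) := by
  rw [phi_succ]
  simp [coeff_X_mul]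

lemma sh_c0 (n l : ℕ) : (phiSharp s γ (n+1) l).coeff 0 =
    (((dd γ l (n + 1 + l))⁻¹ : ℝ) : ℂ) * (phiSharp s γ n l).coeff 0 := by
  rw [phiSharp_succ, coeff_C_mul, coeff_add, coeff_neg, mul_assoc, coeff_C_mul, mul_coeff_zero]
  simp

lemma sh_cs (n l k : ℕ) : (phiSharp s γ (n+1) l).coeff (k+1) =
    (((dd γ l (n + 1 + l))⁻¹ : ℝ) : ℂ) *
      (-((starRingEnd ℂ) (γ l (n+1+l)) * (phi s γ n (l+1)).coeff k) +
        (phiSharp s γ n l).coeff (k+1)) := by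
  rw [phiSharp_succ]
  simp [mul_assoc, coeff_X_mul]

lemma dd_nonneg (k j : ℕ) : 0 ≤ dd γ k j := Real.sqrt_nonneg _

lemma dd_le_one_s11 (k j : ℕ) : dd γ k j ≤ 1 :=
  Real.sqrt_le_one.2 (by nlinarith [norm_nonneg (γ k j), sq_nonneg ‖γ k j‖])

lemma dd_pos_s11 {k j : ℕ} (h : ‖γ k j‖ < 1) : 0 < dd γ k j :=
  Real.sqrt_pos.2 (by nlinarith [norm_nonneg (γ k j)])

lemma dd_sq {k j : ℕ} (h : ‖γ k j‖ < 1) : dd γ k j ^ 2 = 1 - ‖γ k j‖ ^ 2 :=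
  Real.sq_sqrt (by nlinarith [norm_nonneg (γ k j)])

/-- generic norm bounds -/
lemma nb1 (c : ℝ) (hc : 0 ≤ c) (x g y : ℂ) :
    ‖((c : ℝ) : ℂ) * (x - g * y)‖ ≤ c * (‖x‖ + ‖g‖ * ‖y‖) := by
  rw [norm_mul, Complex.norm_real, Real.norm_eq_abs, abs_of_nonneg hc]
  gcongr
  exact (norm_sub_le _ _).trans (by rw [norm_mul])

lemma nb2 (c : ℝ) (hc : 0 ≤ c) (x g y : ℂ) :
    ‖((c : ℝ) : ℂ) * (-(g * x) + y)‖ ≤ c * (‖g‖ * ‖x‖ + ‖y‖) := by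
  rw [norm_mul, Complex.norm_real, Real.norm_eq_abs, abs_of_nonneg hc]
  gcongr
  exact (norm_add_le _ _).trans (by rw [norm_neg, norm_mul])

lemma nb0 (c : ℝ) (g y : ℂ) :
    ‖((c : ℝ) : ℂ) * (-(g * y))‖ = |c| * (‖g‖ * ‖y‖) := by
  rw [norm_mul, Complex.norm_real, Real.norm_eq_abs, norm_neg, norm_mul]

/-- All consequences of the Szegő condition for a fixed `l`. -/
lemma szego_facts (hγ : ∀ k j, k < j → ‖γ k j‖ < 1) {l : ℕ} {g : ℝ} (hg : 0 < g)
    (ht : Filter.Tendsto (fun m => ∏ p ∈ Finset.Icc 1 m, dd γ l (l + p))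
      Filter.atTop (nhds g)) :
    ∃ C : ℝ, 1 ≤ C ∧
      (∀ n : ℕ, (∏ p ∈ Finset.Icc 1 n, dd γ l (l + p))⁻¹ ≤ C) ∧
      (∀ n : ℕ, (dd γ l (n + 1 + l))⁻¹ ≤ C) ∧
      Summable (fun n : ℕ => ‖γ l (n + 1 + l)‖ ^ 2) := by
  set P : ℕ → ℝ := fun m => ∏ p ∈ Finset.Icc 1 m, dd γ l (l + p) with hP
  have hdpos : ∀ p : ℕ, 1 ≤ p → 0 < dd γ l (l + p) := by
    intro p hp
    exact dd_pos_s11 γ (hγ l (l + p) (by omega))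
  have hPpos : ∀ m, 0 < P m := by
    intro m
    exact Finset.prod_pos fun p hp => hdpos p (Finset.mem_Icc.1 hp).1
  have hPle : ∀ m, P m ≤ 1 := by
    intro m
    exact Finset.prod_le_one (fun p hp => (hdpos p (Finset.mem_Icc.1 hp).1).le)
      (fun p hp => dd_le_one_s11 γ _ _)
  have hanti : ∀ m m', m ≤ m' → P m' ≤ P m := by
    intro m m' h
    induction m' , h using Nat.le_induction with
    | base => exact le_refl _
    | succ m' hmm' ih =>
      have h2 : P (m' + 1) = P m' * dd γ l (l + (m' + 1)) := by
        rw [hP]; exact Finset.prod_Icc_succ_top (by omega) _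
      rw [h2]
      nlinarith [hPpos m', dd_le_one_s11 γ l (l + (m' + 1)), dd_nonneg γ l (l + (m' + 1))]
  have hgle : ∀ m, g ≤ P m := by
    intro m
    refine le_of_tendsto ht ?_
    filter_upwards [Filter.eventually_ge_atTop m] with m' hm'
    exact hanti m m' hm'
  refine ⟨g⁻¹, ?_, ?_, ?_, ?_⟩
  · have h1 : g ≤ 1 := (hgle 0).trans_eq (by simp [hP])
    have h2 : g * g⁻¹ = 1 := mul_inv_cancel₀ hg.ne'
    nlinarith [inv_pos.2 hg]
  · intro n
    exact inv_anti₀ hg (hgle n)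
  · intro n
    have h1 : g ≤ P (n + 1) := hgle (n + 1)
    have h2 : P (n + 1) = P n * dd γ l (l + (n + 1)) := by
      simp only [hP]
      exact Finset.prod_Icc_succ_top (by omega) _
    have h3 : dd γ l (l + (n + 1)) = dd γ l (n + 1 + l) := by rw [add_comm]
    have h4 : g ≤ dd γ l (n + 1 + l) := by
      rw [h2, h3] at h1
      nlinarith [hPpos n, hPle n, dd_pos_s11 γ (hγ l (n+1+l) (by omega))]
    exact inv_anti₀ hg h4
  · -- summability
    have key : ∀ m : ℕ, ∑ p ∈ Finset.Icc 1 m, ‖γ l (l + p)‖ ^ 2 ≤ -Real.log (g ^ 2) := by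
      intro m
      have h1 : g ^ 2 ≤ P m ^ 2 := by nlinarith [hgle m, hPpos m]
      have h2 : P m ^ 2 = ∏ p ∈ Finset.Icc 1 m, (1 - ‖γ l (l + p)‖ ^ 2) := by
        rw [hP, ← Finset.prod_pow]
        exact Finset.prod_congr rfl fun p hp =>
          dd_sq γ (hγ l (l + p) (by have := (Finset.mem_Icc.1 hp).1; omega))
      have h3 : ∏ p ∈ Finset.Icc 1 m, (1 - ‖γ l (l + p)‖ ^ 2) ≤
          ∏ p ∈ Finset.Icc 1 m, Real.exp (-(‖γ l (l + p)‖ ^ 2)) := by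
        refine Finset.prod_le_prod (fun p hp => ?_) (fun p hp => ?_)
        · have := hγ l (l + p) (by have := (Finset.mem_Icc.1 hp).1; omega)
          nlinarith [norm_nonneg (γ l (l + p))]
        · nlinarith [Real.add_one_le_exp (-(‖γ l (l + p)‖ ^ 2))]
      rw [← Real.exp_sum] at h3
      have h4 : g ^ 2 ≤ Real.exp (∑ p ∈ Finset.Icc 1 m, -(‖γ l (l + p)‖ ^ 2)) := by
        linarith [h1, h2 ▸ h3]
      have h5 := Real.log_le_log (by positivity) h4
      rw [Real.log_exp] at h5
      rw [Finset.sum_neg_distrib] at h5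
      linarith
    refine summable_of_sum_range_le (c := -Real.log (g ^ 2)) (fun n => by positivity) ?_
    intro m
    have : ∑ n ∈ Finset.range m, ‖γ l (n + 1 + l)‖ ^ 2 =
        ∑ p ∈ Finset.Icc 1 m, ‖γ l (l + p)‖ ^ 2 := by
      rw [show Finset.Icc 1 m = Finset.Ico 1 (m + 1) by rw [Finset.Ico_add_one_right_eq_Icc]]
      rw [Finset.sum_Ico_eq_sum_range]
      simp only [add_tsub_cancel_right]
      refine Finset.sum_congr rfl fun i _ => ?_
      rw [show i + 1 + l = l + (1 + i) by omega]
    rw [this]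
    exact key m

lemma sh_c0_formula (n l : ℕ) : (phiSharp s γ n l).coeff 0 =
    ((((Real.sqrt (s l))⁻¹ * (∏ p ∈ Finset.Icc 1 n, dd γ l (l + p))⁻¹ : ℝ)) : ℂ) := by
  induction n with
  | zero => simp [phiSharp_zero_def]
  | succ n ih =>
    have hprod : (∏ p ∈ Finset.Icc 1 (n+1), dd γ l (l + p)) =
        (∏ p ∈ Finset.Icc 1 n, dd γ l (l + p)) * dd γ l (n + 1 + l) := by
      rw [Finset.prod_Icc_succ_top (by omega), show l + (n+1) = n + 1 + l by omega]
    rw [sh_c0, ih, hprod]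
    push_cast [mul_inv]
    ring

lemma key (hs : ∀ l, 0 < s l) (hγ : ∀ k j, k < j → ‖γ k j‖ < 1)
    (hSzego : ∀ l, ∃ g : ℝ, 0 < g ∧
      Filter.Tendsto (fun m => ∏ p ∈ Finset.Icc 1 m, dd γ l (l + p)) Filter.atTop (nhds g)) :
    ∀ k l, Summable (fun n => ‖(phi s γ n l).coeff k‖ ^ 2) ∧
      ∃ C : ℝ, 0 ≤ C ∧ ∀ n, ‖(phiSharp s γ n l).coeff k‖ ≤ C := by
  intro k
  induction k with
  | zero =>
    intro l
    obtain ⟨g, hg, ht⟩ := hSzego l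
    obtain ⟨C, hC1, hCP, hCd, hsum⟩ := szego_facts γ hγ hg ht
    have hsl : (0:ℝ) < (Real.sqrt (s l))⁻¹ := by
      have := Real.sqrt_pos.2 (hs l); positivity
    set B0 : ℝ := (Real.sqrt (s l))⁻¹ * C with hB0def
    have hB00 : 0 ≤ B0 := by positivity
    have hB0 : ∀ n, ‖(phiSharp s γ n l).coeff 0‖ ≤ B0 := by
      intro n
      rw [sh_c0_formula, Complex.norm_real, Real.norm_eq_abs, abs_of_nonneg]
      · rw [hB0def]; gcongr
        exact hCP n
      · have := hCP n
        have hppos : (0:ℝ) < (∏ p ∈ Finset.Icc 1 n, dd γ l (l + p))⁻¹ := by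
          have : 0 < ∏ p ∈ Finset.Icc 1 n, dd γ l (l + p) :=
            Finset.prod_pos fun p hp => dd_pos_s11 γ (hγ l (l+p) (by
              have := (Finset.mem_Icc.1 hp).1; omega))
          positivity
        positivity
    refine ⟨?_, B0, hB00, hB0⟩
    have hle : ∀ n, ‖(phi s γ (n+1) l).coeff 0‖ ≤ C * B0 * ‖γ l (n+1+l)‖ := by
      intro n
      rw [phi_c0, nb0, abs_of_nonneg (inv_nonneg.2 (dd_nonneg γ l (n+1+l)) : (0:ℝ) ≤ (dd γ l (n+1+l))⁻¹)]
      have h1 := hCd n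
      have h2 := hB0 n
      have h3 := norm_nonneg (γ l (n+1+l))
      have h4 := norm_nonneg ((phiSharp s γ n l).coeff 0)
      have h5 : (0:ℝ) ≤ (dd γ l (n+1+l))⁻¹ := inv_nonneg.2 (dd_nonneg γ l (n+1+l))
      nlinarith [mul_le_mul h1 (mul_le_mul_of_nonneg_left h2 h3) (by positivity) (by linarith)]
    have hsum1 : Summable (fun n => ‖(phi s γ (n+1) l).coeff 0‖ ^ 2) := by
      refine Summable.of_nonneg_of_le (fun n => by positivity) (fun n => ?_)
        (hsum.mul_left ((C * B0) ^ 2))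
      have h := pow_le_pow_left₀ (norm_nonneg _) (hle n) 2
      calc ‖(phi s γ (n+1) l).coeff 0‖ ^ 2 ≤ (C * B0 * ‖γ l (n+1+l)‖) ^ 2 := h
        _ = (C * B0) ^ 2 * ‖γ l (n+1+l)‖ ^ 2 := by ring
    exact (summable_nat_add_iff 1).1 hsum1
  | succ k ih =>
    intro l
    obtain ⟨g, hg, ht⟩ := hSzego l
    obtain ⟨C, hC1, hCP, hCd, hsum⟩ := szego_facts γ hγ hg ht
    obtain ⟨hsumA, -⟩ := ih (l+1)
    have hPpos : ∀ n, (0:ℝ) < ∏ p ∈ Finset.Icc 1 n, dd γ l (l + p) := by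
      intro n
      exact Finset.prod_pos fun p hp => dd_pos_s11 γ (hγ l (l+p) (by
        have := (Finset.mem_Icc.1 hp).1; omega))
    have hPle : ∀ n, (∏ p ∈ Finset.Icc 1 n, dd γ l (l + p)) ≤ 1 := by
      intro n
      exact Finset.prod_le_one (fun p hp => (dd_pos_s11 γ (hγ l (l+p) (by
        have := (Finset.mem_Icc.1 hp).1; omega))).le) (fun p hp => dd_le_one_s11 γ _ _)
    have hsumh : Summable
        (fun m => (‖γ l (m+1+l)‖ ^ 2 + ‖(phi s γ m (l+1)).coeff k‖ ^ 2) / 2) :=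
      (hsum.add hsumA).div_const 2
    set T : ℝ := ∑' m, (‖γ l (m+1+l)‖ ^ 2 + ‖(phi s γ m (l+1)).coeff k‖ ^ 2) / 2 with hTdef
    have hT0 : 0 ≤ T := tsum_nonneg fun m => by positivity
    -- bound for the sharp coefficients
    have hBb : ∀ n, ‖(phiSharp s γ n l).coeff (k+1)‖ ≤
        (∏ p ∈ Finset.Icc 1 n, dd γ l (l + p))⁻¹ *
          ∑ m ∈ Finset.range n, ‖γ l (m+1+l)‖ * ‖(phi s γ m (l+1)).coeff k‖ := by
      intro n
      induction n with
      | zero => simp [phiSharp_zero_def, coeff_C]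
      | succ n ihn =>
        have hd := dd_pos_s11 γ (hγ l (n+1+l) (by omega))
        have hnorm : ‖(phiSharp s γ (n+1) l).coeff (k+1)‖ ≤
            (dd γ l (n+1+l))⁻¹ * (‖γ l (n+1+l)‖ * ‖(phi s γ n (l+1)).coeff k‖ +
              ‖(phiSharp s γ n l).coeff (k+1)‖) := by
          rw [sh_cs]
          have := nb2 ((dd γ l (n+1+l))⁻¹) (inv_nonneg.2 (dd_nonneg γ l (n+1+l))) ((phi s γ n (l+1)).coeff k)
            ((starRingEnd ℂ) (γ l (n+1+l))) ((phiSharp s γ n l).coeff (k+1))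
          simpa [RCLike.norm_conj] using this
        have hprod : (∏ p ∈ Finset.Icc 1 (n+1), dd γ l (l + p)) =
            (∏ p ∈ Finset.Icc 1 n, dd γ l (l + p)) * dd γ l (n + 1 + l) := by
          rw [Finset.prod_Icc_succ_top (by omega), show l + (n+1) = n + 1 + l by omega]
        rw [hprod, Finset.sum_range_succ, mul_inv]
        have hS0 : (0:ℝ) ≤ ∑ m ∈ Finset.range n, ‖γ l (m+1+l)‖ * ‖(phi s γ m (l+1)).coeff k‖ :=
          Finset.sum_nonneg fun m _ => by positivity
        have hPinv1 : (1:ℝ) ≤ (∏ p ∈ Finset.Icc 1 n, dd γ l (l + p))⁻¹ :=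
          (one_le_inv₀ (hPpos n)).2 (hPle n)
        have hga : (0:ℝ) ≤ ‖γ l (n+1+l)‖ * ‖(phi s γ n (l+1)).coeff k‖ := by positivity
        have hdi : (0:ℝ) ≤ (dd γ l (n+1+l))⁻¹ := inv_nonneg.2 (dd_nonneg γ l (n+1+l))
        nlinarith [hnorm, ihn, mul_nonneg hdi hga, mul_nonneg hdi
          (mul_nonneg (by linarith : (0:ℝ) ≤ (∏ p ∈ Finset.Icc 1 n, dd γ l (l + p))⁻¹) hS0),
          mul_nonneg hdi (mul_nonneg (by linarith : (0:ℝ) ≤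
            (∏ p ∈ Finset.Icc 1 n, dd γ l (l + p))⁻¹ - 1) hga)]
    have hBbound : ∀ n, ‖(phiSharp s γ n l).coeff (k+1)‖ ≤ C * T := by
      intro n
      refine (hBb n).trans ?_
      have hS : (∑ m ∈ Finset.range n, ‖γ l (m+1+l)‖ * ‖(phi s γ m (l+1)).coeff k‖) ≤ T := by
        rw [hTdef]
        refine (Finset.sum_le_sum (fun m _ => ?_)).trans
          (Summable.sum_le_tsum _ (fun m _ => by positivity) hsumh)
        nlinarith [sq_nonneg (‖γ l (m+1+l)‖ - ‖(phi s γ m (l+1)).coeff k‖)]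
      have hS0 : (0:ℝ) ≤ ∑ m ∈ Finset.range n, ‖γ l (m+1+l)‖ * ‖(phi s γ m (l+1)).coeff k‖ :=
        Finset.sum_nonneg fun m _ => by positivity
      exact mul_le_mul (hCP n) hS hS0 (by linarith)
    refine ⟨?_, C * T, by positivity, hBbound⟩
    have hle : ∀ n, ‖(phi s γ (n+1) l).coeff (k+1)‖ ≤
        C * (‖(phi s γ n (l+1)).coeff k‖ + (C * T) * ‖γ l (n+1+l)‖) := by
      intro n
      rw [phi_cs]
      refine (nb1 ((dd γ l (n+1+l))⁻¹) (inv_nonneg.2 (dd_nonneg γ l (n+1+l))) _ _ _).trans ?_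
      have h1 := hCd n
      have h2 := hBbound n
      have h3 := norm_nonneg (γ l (n+1+l))
      have h4 := norm_nonneg ((phi s γ n (l+1)).coeff k)
      have h5 : (0:ℝ) ≤ (dd γ l (n+1+l))⁻¹ := inv_nonneg.2 (dd_nonneg γ l (n+1+l))
      have h6 := norm_nonneg ((phiSharp s γ n l).coeff (k+1))
      nlinarith [mul_le_mul h1 (add_le_add (le_refl ‖(phi s γ n (l+1)).coeff k‖)
        (mul_le_mul_of_nonneg_left h2 h3)) (by positivity) (by linarith),
        mul_nonneg (mul_nonneg (by linarith : (0:ℝ) ≤ C) h3) (mul_nonneg (by positivity) hT0)]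
    have hsum1 : Summable (fun n => ‖(phi s γ (n+1) l).coeff (k+1)‖ ^ 2) := by
      refine Summable.of_nonneg_of_le (fun n => by positivity) (fun n => ?_)
        (((hsumA.add (hsum.mul_left ((C*T)^2))).mul_left (2 * C ^ 2)))
      have h := pow_le_pow_left₀ (norm_nonneg _) (hle n) 2
      have hab := sq_nonneg (‖(phi s γ n (l+1)).coeff k‖ - (C*T) * ‖γ l (n+1+l)‖)
      have hC0 : (0:ℝ) ≤ C ^ 2 := sq_nonneg C
      nlinarith [h, mul_nonneg hC0 hab]
    exact (summable_nat_add_iff 1).1 hsum1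

end Aux

/-- First half of Theorem 3.3 (`Φ_n → 0`): under the Szegő class condition (for every `l`,
the partial products `∏_{p=1}^m d_{l,l+p}` converge to a positive limit), for every
`k, l ∈ ℕ` one has `φ_n^{(k)}(0,l) → 0` as `n → ∞`; equivalently, the coefficient of `X^k`
in `φ_n(X,l)` tends to `0` as `n → ∞`. -/
theorem phi_derivative_tendsto_zero (s : ℕ → ℝ) (γ : ℕ → ℕ → ℂ)
    (hs : ∀ l, 0 < s l) (hγ : ∀ k j, k < j → ‖γ k j‖ < 1)
    (hSzego : ∀ l, ∃ g : ℝ, 0 < g ∧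
      Filter.Tendsto (fun m => ∏ p ∈ Finset.Icc 1 m, dd γ l (l + p)) Filter.atTop (nhds g))
    (k l : ℕ) :
    Filter.Tendsto (fun n => (Polynomial.derivative^[k] (phi s γ n l)).eval 0)
      Filter.atTop (nhds 0) ∧
    Filter.Tendsto (fun n => (phi s γ n l).coeff k) Filter.atTop (nhds 0) := by
  have hk := key s γ hs hγ hSzego k l
  have h2 : Filter.Tendsto (fun n => (phi s γ n l).coeff k) Filter.atTop (nhds 0) := by
    rw [tendsto_zero_iff_norm_tendsto_zero]
    have hsq := hk.1.tendsto_atTop_zero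
    have h := hsq.sqrt
    simp only [Real.sqrt_zero] at h
    have heq : (fun n => ‖(phi s γ n l).coeff k‖) =
        fun n => Real.sqrt (‖(phi s γ n l).coeff k‖ ^ 2) := by
      funext n; rw [Real.sqrt_sq (norm_nonneg _)]
    rw [heq]
    exact h
  refine ⟨?_, h2⟩
  have heq : (fun n => (Polynomial.derivative^[k] (phi s γ n l)).eval 0) =
      fun n => ((Nat.factorial k : ℕ) : ℂ) * (phi s γ n l).coeff k := by
    funext n
    rw [← Polynomial.coeff_zero_eq_eval_zero, Polynomial.coeff_iterate_derivative]
    simp [Nat.descFactorial_self, nsmul_eq_mul]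
  rw [heq]
  simpa using h2.const_mul ((Nat.factorial k : ℕ) : ℂ)
end
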